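/- Let f(z) = ∑_{n≥0} (-1)^n z^{rn}/(rn)!. Then the coefficient of z^{rn}/(rn)! in -log f(z) is a positive integer for every n ≥ 1 and r ≥ 2. -/

import Mathlib

open PowerSeries

open Finset in
private lemma aux_fact (a b : ℕ) :
    ((a+b).factorial : ℚ) = (a+b).choose a * a.factorial * b.factorial := by
  rw [← Nat.add_choose_mul_factorial_mul_factorial a b, Nat.choose_symm_add]
  push_cast
  ring

/-- iterated derivative coefficients -/
private lemma aux_iter (k : ℕ) (φ : PowerSeries ℚ) (n : ℕ) :
    (n.factorial : ℚ) * coeff n ((⇑(d⁄dX ℚ))^[k] φ) =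
      ((n+k).factorial : ℚ) * coeff (n+k) φ := by
  induction k generalizing φ with
  | zero => simp
  | succ k ih =>
    rw [Function.iterate_succ_apply, ih, coeff_derivative]
    rw [show n + (k+1) = (n+k) + 1 by ring, Nat.factorial_succ]
    push_cast
    ring

private noncomputable def gg (f : PowerSeries ℚ) (i : ℕ) : PowerSeries ℚ :=
  -((⇑(d⁄dX ℚ))^[i] f) * f⁻¹

theorem stmt_19 (r : ℕ) (hr : 2 ≤ r)
    (f L : PowerSeries ℚ)
    (hf : f = PowerSeries.mk fun k =>
      if r ∣ k then (-1 : ℚ) ^ (k / r) / (Nat.factorial k : ℚ) else 0)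
    (hL0 : PowerSeries.constantCoeff L = 0)
    (hlog : f * L.derivativeFun = -f.derivativeFun) :
    ∀ n : ℕ, 1 ≤ n → ∃ m : ℤ, 0 < m ∧
      (PowerSeries.coeff (r * n) L) * (Nat.factorial (r * n) : ℚ) = (m : ℚ) := by
  have hr0 : 0 < r := by omega
  have hcf : ∀ k, coeff k f =
      if r ∣ k then (-1 : ℚ) ^ (k / r) / (Nat.factorial k : ℚ) else 0 := by
    intro k; rw [hf, coeff_mk]
  have hφ : ∀ k, (k.factorial : ℚ) * coeff k f =
      ((if r ∣ k then (-1:ℤ)^(k/r) else 0 : ℤ) : ℚ) := by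
    intro k
    rw [hcf]
    split_ifs with h
    · rw [mul_div_cancel₀]
      · push_cast; ring
      · exact_mod_cast k.factorial_ne_zero
    · simp
  have hfc : constantCoeff f = 1 := by
    rw [← coeff_zero_eq_constantCoeff, hcf]
    simp
  have hfc0 : constantCoeff f ≠ 0 := by rw [hfc]; exact one_ne_zero
  have hfinv : f * f⁻¹ = 1 := PowerSeries.mul_inv_cancel f hfc0
  set g : ℕ → PowerSeries ℚ := gg f with hgdef
  have hgval : ∀ i, g i = -((⇑(d⁄dX ℚ))^[i] f) * f⁻¹ := fun i => rfl
  -- f⁽ʳ⁾ = -f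
  have hDrf : (⇑(d⁄dX ℚ))^[r] f = -f := by
    ext n
    have h := aux_iter r f n
    have hfacne : (n.factorial : ℚ) ≠ 0 := by exact_mod_cast n.factorial_ne_zero
    rw [map_neg]
    by_cases hd : r ∣ n
    · have hd' : r ∣ n + r := (Nat.dvd_add_self_right).mpr hd
      rw [hcf (n+r), if_pos hd', Nat.add_div_right n hr0] at h
      rw [mul_div_cancel₀] at h
      · rw [hcf n, if_pos hd]
        apply mul_left_cancel₀ hfacne
        rw [h, pow_succ]
        field_simp
      · exact_mod_cast (n+r).factorial_ne_zero
    · have hd' : ¬ r ∣ n + r := fun hc => hd ((Nat.dvd_add_self_right).mp hc)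
      rw [hcf (n+r), if_neg hd', mul_zero] at h
      rw [hcf n, if_neg hd, neg_zero]
      exact (mul_eq_zero.mp h).resolve_left hfacne
  have hgr : g r = 1 := by
    rw [hgval r, hDrf, neg_neg]; exact hfinv
  -- derivative relation
  have hgd : ∀ i, d⁄dX ℚ (g i) = g (i+1) + g i * g 1 := by
    intro i
    have h2 : (⇑(d⁄dX ℚ))^[i+1] f = d⁄dX ℚ ((⇑(d⁄dX ℚ))^[i] f) :=
      Function.iterate_succ_apply' _ i f
    rw [hgval i, hgval (i+1), hgval 1, Function.iterate_one]
    rw [neg_mul, map_neg, Derivation.leibniz, smul_eq_mul, smul_eq_mul, derivative_inv', h2]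
    ring
  -- coefficient recurrence
  have hrec : ∀ i n, coeff (n+1) (g i) * ((n : ℚ) + 1) =
      coeff n (g (i+1)) +
        ∑ p ∈ Finset.HasAntidiagonal.antidiagonal n, coeff p.1 (g i) * coeff p.2 (g 1) := by
    intro i n
    have h := congrArg (coeff n) (hgd i)
    rw [coeff_derivative, map_add, coeff_mul] at h
    exact h
  -- vanishing constant coefficients
  have hg0 : ∀ i, 1 ≤ i → i < r → coeff 0 (g i) = 0 := by
    intro i h1 h2
    have h := aux_iter i f 0
    have hnd : ¬ r ∣ i := fun hc => absurd (Nat.le_of_dvd (by omega) hc) (by omega)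
    rw [hcf, if_neg] at h
    · simp only [Nat.factorial_zero, Nat.cast_one, one_mul, mul_zero, zero_add] at h
      have h0 : constantCoeff ((⇑(d⁄dX ℚ))^[i] f) = 0 := by
        rw [← coeff_zero_eq_constantCoeff_apply]; exact h
      rw [hgval i, coeff_zero_eq_constantCoeff_apply, map_mul, map_neg, h0, neg_zero, zero_mul]
    · simpa using hnd
  -- nonnegativity
  have hnn : ∀ n i, 1 ≤ i → i ≤ r → 0 ≤ coeff n (g i) := by
    intro n
    induction n using Nat.strong_induction_on with
    | _ n ih =>
      intro i h1 hir
      rcases eq_or_lt_of_le hir with hR | hR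
      · subst hR
        rw [hgr, coeff_one]
        split_ifs <;> norm_num
      · match n with
        | 0 => rw [hg0 i h1 hR]
        | Nat.succ m =>
          show 0 ≤ coeff (m+1) (g i)
          have h := hrec i m
          push_cast at h
          have hpos : (0:ℚ) < (m:ℚ) + 1 := by positivity
          have h1' : 0 ≤ coeff m (g (i+1)) := ih m (by omega) (i+1) (by omega) (by omega)
          have h2' : 0 ≤ ∑ p ∈ Finset.HasAntidiagonal.antidiagonal m, coeff p.1 (g i) * coeff p.2 (g 1) := by
            apply Finset.sum_nonneg
            intro p hp
            have hpm := Finset.HasAntidiagonal.mem_antidiagonal.mp hp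
            exact mul_nonneg (ih p.1 (by omega) i h1 (by omega))
              (ih p.2 (by omega) 1 le_rfl (by omega))
          nlinarith [h]
  -- positivity
  have hpos : ∀ m n i, 1 ≤ n → 1 ≤ i → i < r → i + m = r*n → 0 < coeff m (g i) := by
    intro m
    induction m using Nat.strong_induction_on with
    | _ m ih =>
      intro n i hn h1 hir him
      have hrn : r ≤ r * n := by
        calc r = r * 1 := by ring
        _ ≤ r * n := Nat.mul_le_mul_left r hn
      have hm1 : 1 ≤ m := by omega
      obtain ⟨m', rfl⟩ : ∃ m', m = m' + 1 := ⟨m - 1, by omega⟩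
      have h := hrec i m'
      push_cast at h
      have hpos' : (0:ℚ) < (m':ℚ) + 1 := by positivity
      have hconv : 0 ≤ ∑ p ∈ Finset.HasAntidiagonal.antidiagonal m',
          coeff p.1 (g i) * coeff p.2 (g 1) := by
        apply Finset.sum_nonneg
        intro p hp
        exact mul_nonneg (hnn p.1 i h1 (by omega)) (hnn p.2 1 le_rfl (by omega))
      rcases lt_or_eq_of_le (show i + 1 ≤ r by omega) with hiR | hiR
      · have hg1 : 0 < coeff m' (g (i+1)) :=
          ih m' (by omega) n (i+1) hn (by omega) hiR (by omega)
        nlinarith [h]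
      · rcases Nat.lt_or_ge n 2 with hn2 | hn2
        · -- n = 1, so m' = 0
          have hn1 : n = 1 := by omega
          have hm0 : m' = 0 := by
            have : r * n = r := by rw [hn1]; ring
            omega
          subst hm0
          have hone : coeff 0 (g (i+1)) = 1 := by
            rw [hiR, hgr, coeff_one, if_pos rfl]
          nlinarith [h, hconv]
        · -- n ≥ 2
          obtain ⟨k, rfl⟩ : ∃ k, n = k + 2 := ⟨n - 2, by omega⟩
          have e1 : r * (k+2) = r*k + r + r := by ring
          have e2 : r * (k+1) = r*k + r := by ring
          have hgi1 : 0 ≤ coeff m' (g (i+1)) := hnn m' (i+1) (by omega) (by omega)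
          have ha : (r*k + 1) + (r - 1) = m' := by omega
          have hmem : (r*k + 1, r - 1) ∈ Finset.HasAntidiagonal.antidiagonal m' :=
            Finset.HasAntidiagonal.mem_antidiagonal.mpr ha
          have ht1 : 0 < coeff (r*k+1) (g i) :=
            ih (r*k+1) (by omega) (k+1) i (by omega) h1 hir (by omega)
          have ht2 : 0 < coeff (r-1) (g 1) :=
            ih (r-1) (by omega) 1 1 le_rfl le_rfl (by omega) (by omega)
          have hsum : coeff (r*k+1) (g i) * coeff (r-1) (g 1) ≤
              ∑ p ∈ Finset.HasAntidiagonal.antidiagonal m', coeff p.1 (g i) * coeff p.2 (g 1) := by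
            apply Finset.single_le_sum
              (f := fun p : ℕ×ℕ => coeff p.1 (g i) * coeff p.2 (g 1)) _ hmem
            intro p hp
            exact mul_nonneg (hnn p.1 i h1 (by omega)) (hnn p.2 1 le_rfl (by omega))
          nlinarith [h, hgi1, mul_pos ht1 ht2]
  -- L' = g 1
  have hL' : L.derivativeFun = g 1 := by
    have h1 : L.derivativeFun = f⁻¹ * (f * L.derivativeFun) := by
      rw [← mul_assoc, mul_comm f⁻¹ f, hfinv, one_mul]
    rw [h1, hlog, hgval 1, Function.iterate_one]
    have h4 : f.derivativeFun = d⁄dX ℚ f := rfl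
    rw [h4]
    ring
  -- integrality
  have hint : ∀ k, (k.factorial : ℚ) * coeff k L ∈ (Int.castRingHom ℚ).range := by
    intro k
    induction k using Nat.strong_induction_on with
    | _ k ih =>
      match k with
      | 0 =>
        rw [coeff_zero_eq_constantCoeff_apply, hL0, mul_zero]
        exact ⟨0, by simp⟩
      | Nat.succ k =>
        show ((k+1).factorial : ℚ) * coeff (k+1) L ∈ _
        have hE := congrArg (coeff k) hlog
        rw [coeff_mul, map_neg, show f.derivativeFun = d⁄dX ℚ f from rfl, coeff_derivativeFun] at hE
        have hmem0 : ((0:ℕ), k) ∈ Finset.HasAntidiagonal.antidiagonal k := by simp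
        rw [← Finset.add_sum_erase _ _ hmem0] at hE
        have hc0 : coeff 0 f = 1 := by rw [coeff_zero_eq_constantCoeff_apply, hfc]
        rw [hc0, one_mul] at hE
        have key : ((k+1).factorial : ℚ) * coeff (k+1) L =
            -(((k+1).factorial : ℚ) * coeff (k+1) f) -
              ∑ p ∈ (Finset.HasAntidiagonal.antidiagonal k).erase (0, k),
                (k.factorial : ℚ) * (coeff p.1 f * coeff p.2 L.derivativeFun) := by
          have e1 : coeff k L.derivativeFun = coeff (k+1) L * ((k : ℚ) + 1) :=
            coeff_derivativeFun L k
          have h' := congrArg (fun x : ℚ => (k.factorial : ℚ) * x) hE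
          simp only [mul_add, Finset.mul_sum, e1] at h'
          have e2 : (((k+1).factorial : ℕ) : ℚ) = (k.factorial : ℚ) * ((k:ℚ)+1) := by
            rw [Nat.factorial_succ]; push_cast; ring
          rw [e2]
          linear_combination h'
        rw [key]
        apply Subring.sub_mem
        · apply Subring.neg_mem
          rw [hφ (k+1)]
          exact ⟨_, rfl⟩
        · apply Subring.sum_mem
          intro p hp
          have hpe := Finset.mem_erase.mp hp
          have hpa := Finset.HasAntidiagonal.mem_antidiagonal.mp hpe.2
          have hp2 : p.2 < k := by
            rcases Nat.lt_or_ge p.2 k with h | h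
            · exact h
            · exfalso
              have h2 : p.2 = k := by omega
              have h1 : p.1 = 0 := by omega
              exact hpe.1 (Prod.ext h1 h2)
          have e3 : coeff p.2 L.derivativeFun = coeff (p.2+1) L * ((p.2 : ℚ) + 1) :=
            coeff_derivativeFun L p.2
          have e4 : (k.factorial : ℚ) =
              (k.choose p.1) * (p.1.factorial : ℚ) * (p.2.factorial : ℚ) := by
            rw [← hpa]; exact aux_fact p.1 p.2
          have e5 : (k.factorial : ℚ) * (coeff p.1 f * coeff p.2 L.derivativeFun) =
              (k.choose p.1 : ℚ) * ((p.1.factorial : ℚ) * coeff p.1 f) *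
                (((p.2+1).factorial : ℚ) * coeff (p.2+1) L) := by
            rw [e3, e4, Nat.factorial_succ]
            push_cast
            ring
          rw [e5]
          apply Subring.mul_mem
          apply Subring.mul_mem
          · exact ⟨(k.choose p.1 : ℤ), by simp⟩
          · rw [hφ p.1]; exact ⟨_, rfl⟩
          · exact ih (p.2+1) (by omega)
  -- final assembly
  intro n hn
  obtain ⟨m, hm⟩ := hint (r*n)
  have hm' : (m:ℚ) = ((r*n).factorial : ℚ) * coeff (r*n) L := hm
  have hrn : r ≤ r * n := by
    calc r = r * 1 := by ring
    _ ≤ r * n := Nat.mul_le_mul_left r hn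
  obtain ⟨k, hk⟩ : ∃ k, r*n = k + 1 := ⟨r*n - 1, by omega⟩
  have hp : 0 < coeff k (g 1) := hpos k n 1 hn le_rfl (by omega) (by omega)
  rw [← hL', show L.derivativeFun = d⁄dX ℚ L from rfl, coeff_derivativeFun] at hp
  have hkpos : (0:ℚ) < ((k+1 : ℕ) : ℚ) := by positivity
  have hcoefpos : 0 < coeff (k+1) L := by
    by_contra hcon
    push_neg at hcon
    nlinarith [hp, hkpos]
  have hval : (0:ℚ) < ((r*n).factorial : ℚ) * coeff (r*n) L := by
    rw [hk]
    have : (0:ℚ) < (((k+1).factorial : ℕ) : ℚ) := by exact_mod_cast (k+1).factorial_pos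
    exact mul_pos this hcoefpos
  refine ⟨m, ?_, ?_⟩
  · have h2 : (0:ℚ) < (m:ℚ) := by rw [hm']; exact hval
    exact_mod_cast h2
  · rw [mul_comm]
    exact hm'.symm
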